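/- Let A, B, X be d×d real symmetric positive semidefinite matrices with A and B positive definite and A ⪯ B in the Loewner order. Then the minimum eigenvalue of (A+X)^{-1/2} A (A+X)^{-1/2} is at most the minimum eigenvalue of (B+X)^{-1/2} B (B+X)^{-1/2}, and the maximum eigenvalue of (A+X)^{-1/2} A (A+X)^{-1/2} is at most that of (B+X)^{-1/2} B (B+X)^{-1/2}. -/

import Mathlib

open scoped Classical

/-- The minimum eigenvalue of a (Hermitian) real matrix; junk value `0` otherwise. -/
noncomputable def minEig {d : ℕ} (M : Matrix (Fin d) (Fin d) ℝ) : ℝ :=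
  if h : M.IsHermitian then ⨅ i, h.eigenvalues i else 0

/-- The maximum eigenvalue of a (Hermitian) real matrix; junk value `0` otherwise. -/
noncomputable def maxEig {d : ℕ} (M : Matrix (Fin d) (Fin d) ℝ) : ℝ :=
  if h : M.IsHermitian then ⨆ i, h.eigenvalues i else 0

/-- `M^{-1/2}`: the positive-semidefinite square root of `M⁻¹`; junk value `0` otherwise. -/
noncomputable def invSqrt {d : ℕ} (M : Matrix (Fin d) (Fin d) ℝ) :
    Matrix (Fin d) (Fin d) ℝ :=
  if h : (M⁻¹).PosSemidef then
    h.1.eigenvectorUnitary.1 * Matrix.diagonal ((↑) ∘ (√·) ∘ h.1.eigenvalues) *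
      (star h.1.eigenvectorUnitary : Matrix (Fin d) (Fin d) ℝ) else 0

open Matrix in
lemma aux_spectral_shift {d : ℕ} {M : Matrix (Fin d) (Fin d) ℝ} (hM : M.IsHermitian) (c : ℝ) :
    M - c • 1 = (hM.eigenvectorUnitary : Matrix (Fin d) (Fin d) ℝ) *
      diagonal (fun i => hM.eigenvalues i - c) *
      star (hM.eigenvectorUnitary : Matrix (Fin d) (Fin d) ℝ) := by
  set U : Matrix (Fin d) (Fin d) ℝ := (hM.eigenvectorUnitary : Matrix (Fin d) (Fin d) ℝ)
  have hu : U * star U = 1 := mem_unitaryGroup_iff.mp hM.eigenvectorUnitary.2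
  rw [← diagonal_sub, ← smul_one_eq_diagonal, mul_sub, sub_mul, Matrix.mul_smul, mul_one,
    Matrix.smul_mul, hu]
  congr 1
  convert hM.spectral_theorem using 3
  simp only [Unitary.conjStarAlgAut_apply, RCLike.ofReal_real_eq_id, Function.id_comp, U]

open Matrix in
lemma rayleigh_bounds {d : ℕ} {M : Matrix (Fin d) (Fin d) ℝ} (hM : M.IsHermitian)
    (v : Fin d → ℝ) :
    minEig M * (v ⬝ᵥ v) ≤ v ⬝ᵥ (M *ᵥ v) ∧ v ⬝ᵥ (M *ᵥ v) ≤ maxEig M * (v ⬝ᵥ v) := by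
  have hmin : minEig M = ⨅ i, hM.eigenvalues i := by rw [minEig, dif_pos hM]
  have hmax : maxEig M = ⨆ i, hM.eigenvalues i := by rw [maxEig, dif_pos hM]
  constructor
  · have hpsd : (M - minEig M • 1).PosSemidef := by
      rw [aux_spectral_shift hM, star_eq_conjTranspose]
      refine (posSemidef_diagonal_iff.mpr fun i => sub_nonneg.2 ?_).mul_mul_conjTranspose_same _
      rw [hmin]
      exact ciInf_le (Set.Finite.bddBelow (Set.finite_range _)) i
    have h2 := hpsd.dotProduct_mulVec_nonneg v
    simp only [star_trivial, sub_mulVec, dotProduct_sub, smul_mulVec, one_mulVec,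
      dotProduct_smul, smul_eq_mul] at h2
    linarith
  · have hpsd : (maxEig M • 1 - M).PosSemidef := by
      have hshift : maxEig M • (1 : Matrix (Fin d) (Fin d) ℝ) - M =
          (hM.eigenvectorUnitary : Matrix (Fin d) (Fin d) ℝ) *
            diagonal (fun i => maxEig M - hM.eigenvalues i) *
            star (hM.eigenvectorUnitary : Matrix (Fin d) (Fin d) ℝ) := by
        have h1 := aux_spectral_shift hM (maxEig M)
        have h2 : (fun i => maxEig M - hM.eigenvalues i) =
            (fun i => -(hM.eigenvalues i - maxEig M)) := by funext i; ring
        rw [h2, ← diagonal_neg, Matrix.mul_neg, Matrix.neg_mul, ← h1, neg_sub]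
      rw [hshift, star_eq_conjTranspose]
      refine (posSemidef_diagonal_iff.mpr fun i => sub_nonneg.2 ?_).mul_mul_conjTranspose_same _
      rw [hmax]
      exact le_ciSup (Set.Finite.bddAbove (Set.finite_range _)) i
    have h2 := hpsd.dotProduct_mulVec_nonneg v
    simp only [star_trivial, sub_mulVec, dotProduct_sub, smul_mulVec, one_mulVec,
      dotProduct_smul, smul_eq_mul] at h2
    linarith

open Matrix in
/-- All the facts we need about `M := invSqrt (A+X) * A * invSqrt (A+X)`. -/
lemma main_aux {d : ℕ} (A X : Matrix (Fin d) (Fin d) ℝ) (hA : A.PosDef) (hX : X.PosSemidef) :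
    (∀ u : Fin d → ℝ, u ≠ 0 →
      minEig (invSqrt (A + X) * A * invSqrt (A + X)) ≤
          (u ⬝ᵥ (A *ᵥ u)) / (u ⬝ᵥ ((A + X) *ᵥ u)) ∧
      (u ⬝ᵥ (A *ᵥ u)) / (u ⬝ᵥ ((A + X) *ᵥ u)) ≤
          maxEig (invSqrt (A + X) * A * invSqrt (A + X))) ∧
    (0 < d →
      (∃ u : Fin d → ℝ, u ≠ 0 ∧
        minEig (invSqrt (A + X) * A * invSqrt (A + X)) =
          (u ⬝ᵥ (A *ᵥ u)) / (u ⬝ᵥ ((A + X) *ᵥ u))) ∧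
      (∃ u : Fin d → ℝ, u ≠ 0 ∧
        maxEig (invSqrt (A + X) * A * invSqrt (A + X)) =
          (u ⬝ᵥ (A *ᵥ u)) / (u ⬝ᵥ ((A + X) *ᵥ u)))) := by
  have hP : (A + X).PosDef := hA.add_posSemidef hX
  have hPi : ((A + X)⁻¹).PosSemidef := hP.inv.posSemidef
  set S : Matrix (Fin d) (Fin d) ℝ := invSqrt (A + X) with hSdef
  have hSeq : S = hPi.1.eigenvectorUnitary.1 * Matrix.diagonal ((↑) ∘ (√·) ∘ hPi.1.eigenvalues) *
      (star hPi.1.eigenvectorUnitary : Matrix (Fin d) (Fin d) ℝ) := by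
    rw [hSdef, invSqrt, dif_pos hPi]
  have hSps : S.PosSemidef := by
    rw [hSeq, star_eq_conjTranspose]
    exact (PosSemidef.diagonal fun i => Real.sqrt_nonneg _).mul_mul_conjTranspose_same _
  have hSS : S * S = (A + X)⁻¹ := by
    rw [hSeq]
    set U : Matrix (Fin d) (Fin d) ℝ := hPi.1.eigenvectorUnitary.1 with hUdef
    set D : Matrix (Fin d) (Fin d) ℝ := Matrix.diagonal ((↑) ∘ (√·) ∘ hPi.1.eigenvalues) with hDdef
    have hU : star U * U = 1 := mem_unitaryGroup_iff'.mp hPi.1.eigenvectorUnitary.2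
    have hDD : D * D = diagonal hPi.1.eigenvalues := by
      rw [hDdef, diagonal_mul_diagonal]
      congr 1
      funext i
      simp [Real.mul_self_sqrt (hPi.eigenvalues_nonneg i)]
    have hspec := hPi.1.spectral_theorem
    simp only [Unitary.conjStarAlgAut_apply, RCLike.ofReal_real_eq_id, Function.id_comp] at hspec
    calc U * D * star U * (U * D * star U) = U * D * (star U * U) * D * star U := by
          simp only [mul_assoc]
      _ = U * (D * D) * star U := by rw [hU, mul_one, mul_assoc U D D]
      _ = (A + X)⁻¹ := by rw [hDD]; exact hspec.symm
  have hdetP : IsUnit (A + X).det := (isUnit_iff_isUnit_det _).mp hP.isUnit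
  have hdetS : IsUnit S.det := by
    have h1 : S.det * S.det = ((A + X)⁻¹).det := by rw [← det_mul, hSS]
    have h2 : IsUnit (((A + X)⁻¹).det) := (isUnit_iff_isUnit_det _).mp hP.inv.isUnit
    exact isUnit_of_mul_isUnit_left (h1 ▸ h2)
  have hS1 : S * S⁻¹ = 1 := mul_nonsing_inv _ hdetS
  have hS1' : S⁻¹ * S = 1 := nonsing_inv_mul _ hdetS
  have hSPS : S * (A + X) * S = 1 := by
    have h4 : A + X = S⁻¹ * S⁻¹ := by
      calc A + X = ((A + X)⁻¹)⁻¹ := (Matrix.nonsing_inv_nonsing_inv _ hdetP).symm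
        _ = (S * S)⁻¹ := by rw [hSS]
        _ = S⁻¹ * S⁻¹ := Matrix.mul_inv_rev _ _
    rw [h4, show S * (S⁻¹ * S⁻¹) * S = (S * S⁻¹) * (S⁻¹ * S) from by noncomm_ring, hS1, hS1',
      one_mul]
  have hSt : Sᵀ = S := by
    have := hSps.1
    rwa [Matrix.IsHermitian, conjTranspose_eq_transpose_of_trivial] at this
  have hvm : ∀ w : Fin d → ℝ, w ᵥ* S = S *ᵥ w := by
    intro w; conv_lhs => rw [← hSt]
    exact vecMul_transpose _ _
  have key : ∀ (C : Matrix (Fin d) (Fin d) ℝ) (w : Fin d → ℝ),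
      w ⬝ᵥ ((S * C * S) *ᵥ w) = (S *ᵥ w) ⬝ᵥ (C *ᵥ (S *ᵥ w)) := by
    intro C w
    rw [mul_assoc, ← mulVec_mulVec, dotProduct_mulVec, hvm, ← mulVec_mulVec]
  have hMps : (S * A * S).PosSemidef := by
    have := hA.posSemidef.mul_mul_conjTranspose_same S
    rwa [show Sᴴ = S from hSps.1] at this
  have hM : (S * A * S).IsHermitian := hMps.1
  have hq : ∀ u : Fin d → ℝ, u ≠ 0 → 0 < u ⬝ᵥ ((A + X) *ᵥ u) := by
    intro u hu
    have := hP.dotProduct_mulVec_pos hu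
    simpa using this
  constructor
  · intro u hu
    set w : Fin d → ℝ := S⁻¹ *ᵥ u with hwdef
    have hSw : S *ᵥ w = u := by rw [hwdef, mulVec_mulVec, hS1, one_mulVec]
    have hww : w ⬝ᵥ w = u ⬝ᵥ ((A + X) *ᵥ u) := by
      have := key (A + X) w
      rw [hSPS, one_mulVec, hSw] at this
      exact this
    have ha : w ⬝ᵥ ((S * A * S) *ᵥ w) = u ⬝ᵥ (A *ᵥ u) := by rw [key, hSw]
    have hqu := hq u hu
    have hb := rayleigh_bounds hM w
    constructor
    · rw [le_div_iff₀ hqu, ← hww, ← ha]; exact hb.1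
    · rw [div_le_iff₀ hqu, ← hww, ← ha]; exact hb.2
  · intro hd
    have : Nonempty (Fin d) := ⟨⟨0, hd⟩⟩
    have hmin : minEig (S * A * S) = ⨅ i, hM.eigenvalues i := by rw [minEig, dif_pos hM]
    have hmax : maxEig (S * A * S) = ⨆ i, hM.eigenvalues i := by rw [maxEig, dif_pos hM]
    have attain : ∀ lam : ℝ, (∃ i, hM.eigenvalues i = lam) →
        ∃ u : Fin d → ℝ, u ≠ 0 ∧ lam = (u ⬝ᵥ (A *ᵥ u)) / (u ⬝ᵥ ((A + X) *ᵥ u)) := by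
      rintro lam ⟨i, hi⟩
      set v : Fin d → ℝ := ⇑(hM.eigenvectorBasis i) with hvdef
      have hv0 : v ≠ 0 := by
        intro h
        exact hM.eigenvectorBasis.orthonormal.ne_zero i (by ext j; exact congrFun h j)
      have hev : (S * A * S) *ᵥ v = lam • v := by
        rw [hvdef, hM.mulVec_eigenvectorBasis, hi]
      refine ⟨S *ᵥ v, ?_, ?_⟩
      · intro h
        apply hv0
        have : S⁻¹ *ᵥ (S *ᵥ v) = v := by rw [mulVec_mulVec, hS1', one_mulVec]
        rw [h, mulVec_zero] at this
        exact this.symm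
      · have hww : v ⬝ᵥ v = (S *ᵥ v) ⬝ᵥ ((A + X) *ᵥ (S *ᵥ v)) := by
          have := key (A + X) v
          rwa [hSPS, one_mulVec] at this
        have ha : v ⬝ᵥ ((S * A * S) *ᵥ v) = (S *ᵥ v) ⬝ᵥ (A *ᵥ (S *ᵥ v)) := key A v
        have hq2 : 0 < v ⬝ᵥ v := by
          rw [hww]
          exact hq _ (by
            intro h
            apply hv0
            have : S⁻¹ *ᵥ (S *ᵥ v) = v := by rw [mulVec_mulVec, hS1', one_mulVec]
            rw [h, mulVec_zero] at this
            exact this.symm)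
        rw [← ha, hev, ← hww, dotProduct_smul, smul_eq_mul, mul_div_assoc,
          div_self hq2.ne', mul_one]
    constructor
    · obtain ⟨i, hi⟩ := exists_eq_ciInf_of_finite (f := hM.eigenvalues)
      obtain ⟨u, hu, he⟩ := attain _ ⟨i, hi⟩
      exact ⟨u, hu, by rw [hmin]; exact he⟩
    · obtain ⟨i, hi⟩ := exists_eq_ciSup_of_finite (f := hM.eigenvalues)
      obtain ⟨u, hu, he⟩ := attain _ ⟨i, hi⟩
      exact ⟨u, hu, by rw [hmax]; exact he⟩

lemma ratio_mono {a b x : ℝ} (ha : 0 < a) (hab : a ≤ b) (hx : 0 ≤ x) :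
    a / (a + x) ≤ b / (b + x) := by
  rw [div_le_div_iff₀ (by linarith) (by linarith)]
  nlinarith

/-- If `A ⪯ B` then both extreme eigenvalues of `(A+X)^{-1/2} A (A+X)^{-1/2}` are at most
the corresponding extreme eigenvalues of `(B+X)^{-1/2} B (B+X)^{-1/2}`. -/
theorem rayleigh_monotone_in_matrix {d : ℕ} (A B X : Matrix (Fin d) (Fin d) ℝ)
    (hA : A.PosDef) (hB : B.PosDef) (hX : X.PosSemidef)
    (hAB : (B - A).PosSemidef) :
    minEig (invSqrt (A + X) * A * invSqrt (A + X)) ≤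
      minEig (invSqrt (B + X) * B * invSqrt (B + X)) ∧
    maxEig (invSqrt (A + X) * A * invSqrt (A + X)) ≤
      maxEig (invSqrt (B + X) * B * invSqrt (B + X)) := by
  rcases Nat.eq_zero_or_pos d with hd | hd
  · subst hd
    have hz : ∀ M : Matrix (Fin 0) (Fin 0) ℝ, minEig M = 0 ∧ maxEig M = 0 := by
      intro M
      constructor
      · rw [minEig]
        split
        · rw [iInf, Set.range_eq_empty, Real.sInf_empty]
        · rfl
      · rw [maxEig]
        split
        · rw [iSup, Set.range_eq_empty, Real.sSup_empty]
        · rfl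
    constructor <;> simp [(hz _).1, (hz _).2]
  · obtain ⟨hboundA, hattA⟩ := main_aux A X hA hX
    obtain ⟨hboundB, hattB⟩ := main_aux B X hB hX
    have ratio_le : ∀ u : Fin d → ℝ, u ≠ 0 →
        (dotProduct u (A.mulVec u)) / (dotProduct u ((A + X).mulVec u)) ≤
          (dotProduct u (B.mulVec u)) / (dotProduct u ((B + X).mulVec u)) := by
      intro u hu
      have ha : 0 < dotProduct u (A.mulVec u) := by simpa using hA.dotProduct_mulVec_pos hu
      have hx : 0 ≤ dotProduct u (X.mulVec u) := by simpa using hX.dotProduct_mulVec_nonneg u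
      have hab : dotProduct u (A.mulVec u) ≤ dotProduct u (B.mulVec u) := by
        have := hAB.dotProduct_mulVec_nonneg u
        simp only [star_trivial, Matrix.sub_mulVec, dotProduct_sub] at this
        linarith
      have e1 : dotProduct u ((A + X).mulVec u) = dotProduct u (A.mulVec u) + dotProduct u (X.mulVec u) := by
        rw [Matrix.add_mulVec, dotProduct_add]
      have e2 : dotProduct u ((B + X).mulVec u) = dotProduct u (B.mulVec u) + dotProduct u (X.mulVec u) := by
        rw [Matrix.add_mulVec, dotProduct_add]
      rw [e1, e2]
      exact ratio_mono ha hab hx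
    constructor
    · obtain ⟨u, hu, he⟩ := (hattB hd).1
      calc minEig (invSqrt (A + X) * A * invSqrt (A + X)) ≤
            (dotProduct u (A.mulVec u)) / (dotProduct u ((A + X).mulVec u)) := (hboundA u hu).1
        _ ≤ (dotProduct u (B.mulVec u)) / (dotProduct u ((B + X).mulVec u)) := ratio_le u hu
        _ = minEig (invSqrt (B + X) * B * invSqrt (B + X)) := he.symm
    · obtain ⟨u, hu, he⟩ := (hattA hd).2
      calc maxEig (invSqrt (A + X) * A * invSqrt (A + X)) =
            (dotProduct u (A.mulVec u)) / (dotProduct u ((A + X).mulVec u)) := he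
        _ ≤ (dotProduct u (B.mulVec u)) / (dotProduct u ((B + X).mulVec u)) := ratio_le u hu
        _ ≤ maxEig (invSqrt (B + X) * B * invSqrt (B + X)) := (hboundB u hu).2
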